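/- For any number of colours m, no ≡_2-optimal finite m-coloured linear order realizes the same 1-character (including the colour) at two distinct points. -/
import Mathlib


/-- A coloured linear order: a linear order together with a colouring map into `C`. -/
structure CLO (C : Type) where
  carrier : Type
  [ord : LinearOrder carrier]
  colour : carrier → C

attribute [instance] CLO.ord

namespace CLO

variable {C : Type}

/-- Induced coloured suborder on a subset. -/
def sub (A : CLO C) (s : Set A.carrier) : CLO C where
  carrier := ↥s
  colour := fun x => A.colour x.val

/-- The coloured suborder `A^{<a}`. -/
def left (A : CLO C) (a : A.carrier) : CLO C := A.sub {x | x < a}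

/-- The coloured suborder `A^{>a}`. -/
def right (A : CLO C) (a : A.carrier) : CLO C := A.sub {x | a < x}

/-- `n`-move Ehrenfeucht–Fraïssé equivalence of coloured linear orders, via the standard
back-and-forth characterization for linear orders. -/
def EFEquiv : ℕ → CLO C → CLO C → Prop
  | 0, _, _ => True
  | n + 1, A, B =>
      (∀ a : A.carrier, ∃ b : B.carrier, A.colour a = B.colour b ∧
        EFEquiv n (A.left a) (B.left b) ∧ EFEquiv n (A.right a) (B.right b)) ∧
      (∀ b : B.carrier, ∃ a : A.carrier, A.colour a = B.colour b ∧
        EFEquiv n (A.left a) (B.left b) ∧ EFEquiv n (A.right a) (B.right b))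

/-- `a` and `b` realize the same `n`-character (including the colour) in `A`. -/
def SameChar (n : ℕ) (A : CLO C) (a b : A.carrier) : Prop :=
  A.colour a = A.colour b ∧ EFEquiv n (A.left a) (A.left b) ∧
    EFEquiv n (A.right a) (A.right b)

/-- The finite coloured linear order (string) given by a list. -/
def ofList (l : List C) : CLO C where
  carrier := Fin l.length
  colour := l.get

/-- `A` is `≡ₙ`-optimal: no strictly shorter coloured linear order is `n`-equivalent to it. -/
def Optimal (n : ℕ) (A : CLO C) : Prop :=
  ∀ B : CLO C, Finite B.carrier → EFEquiv n A B → Nat.card A.carrier ≤ Nat.card B.carrier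

end CLO

section Aux

variable {C : Type}

lemma ef1_iff (X Y : CLO C) : CLO.EFEquiv 1 X Y ↔
    ((∀ x, ∃ y, X.colour x = Y.colour y) ∧ (∀ y, ∃ x, X.colour x = Y.colour y)) := by
  simp [CLO.EFEquiv]

lemma sameChar_symm {A : CLO C} {a b : A.carrier} (h : CLO.SameChar 1 A a b) :
    CLO.SameChar 1 A b a := by
  obtain ⟨h1, h2, h3⟩ := h
  rw [ef1_iff] at h2 h3
  refine ⟨h1.symm, ?_, ?_⟩ <;> rw [ef1_iff]
  · exact ⟨fun x => (h2.2 x).imp (fun y hy => hy.symm),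
      fun y => (h2.1 y).imp (fun x hx => hx.symm)⟩
  · exact ⟨fun x => (h3.2 x).imp (fun y hy => hy.symm),
      fun y => (h3.1 y).imp (fun x hx => hx.symm)⟩

lemma lt_sub' {α : Type} [LinearOrder α] {p : α → Prop} {x y : Subtype p}
    (h : x.val < y.val) : x < y := Subtype.coe_lt_coe.mp h

lemma lt_sub_val {α : Type} [LinearOrder α] {p : α → Prop} {x y : Subtype p}
    (h : x < y) : x.val < y.val := Subtype.coe_lt_coe.mpr h

lemma key (A : CLO C) (a b : A.carrier) (hab : a < b)
    (h : CLO.SameChar 1 A a b) :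
    CLO.EFEquiv 2 A (A.sub {x | x ≠ b}) := by
  obtain ⟨hcol, hL, hR⟩ := h
  rw [ef1_iff] at hL hR
  -- a colour-copy of `b` strictly above `b`
  obtain ⟨c, hc⟩ := hR.1 ⟨b, hab⟩
  set B := A.sub {x | x ≠ b} with hBdef
  have main : ∀ (x : A.carrier) (hx : x ≠ b),
      CLO.EFEquiv 1 (A.left x) (B.left ⟨x, hx⟩) ∧
      CLO.EFEquiv 1 (A.right x) (B.right ⟨x, hx⟩) := by
    intro x hx
    constructor
    · rw [ef1_iff]
      constructor
      · rintro ⟨z, hz⟩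
        have hz' : z < x := hz
        by_cases hzb : z = b
        · have hax : a < x := lt_trans hab (hzb ▸ hz')
          refine ⟨⟨⟨a, ne_of_lt hab⟩, by exact lt_sub' hax⟩, ?_⟩
          show A.colour z = A.colour a
          rw [hzb]; exact hcol.symm
        · exact ⟨⟨⟨z, hzb⟩, by exact lt_sub' hz'⟩, rfl⟩
      · rintro ⟨⟨z, hzb⟩, hz⟩
        have hz' : (⟨z, hzb⟩ : B.carrier) < ⟨x, hx⟩ := hz
        exact ⟨⟨z, lt_sub_val hz'⟩, rfl⟩
    · rw [ef1_iff]
      constructor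
      · rintro ⟨z, hz⟩
        have hz' : x < z := hz
        by_cases hzb : z = b
        · have hbc : b < c.val := c.property
          have hxc : x < c.val := lt_trans (hzb ▸ hz') hbc
          refine ⟨⟨⟨c.val, ne_of_gt hbc⟩, by exact lt_sub' hxc⟩, ?_⟩
          show A.colour z = A.colour c.val
          rw [hzb]; exact hc
        · exact ⟨⟨⟨z, hzb⟩, by exact lt_sub' hz'⟩, rfl⟩
      · rintro ⟨⟨z, hzb⟩, hz⟩
        have hz' : (⟨x, hx⟩ : B.carrier) < ⟨z, hzb⟩ := hz
        exact ⟨⟨z, lt_sub_val hz'⟩, rfl⟩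
  refine ⟨?_, ?_⟩
  · intro x
    by_cases hx : x = b
    · refine ⟨⟨a, ne_of_lt hab⟩, ?_, ?_, ?_⟩
      · show A.colour x = A.colour a
        rw [hx]; exact hcol.symm
      · subst hx
        rw [ef1_iff]
        constructor
        · rintro ⟨z, hz⟩
          obtain ⟨⟨w, hw⟩, hcw⟩ := hL.2 ⟨z, hz⟩
          have hw' : w < a := hw
          exact ⟨⟨⟨w, ne_of_lt (lt_trans hw' hab)⟩, by exact lt_sub' hw'⟩, hcw.symm⟩
        · rintro ⟨⟨w, hwb⟩, hw⟩
          have hw' : (⟨w, hwb⟩ : B.carrier) < ⟨a, ne_of_lt hab⟩ := hw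
          have hwa : w < a := lt_sub_val hw'
          obtain ⟨⟨z, hz⟩, hcz⟩ := hL.1 ⟨w, hwa⟩
          exact ⟨⟨z, hz⟩, hcz.symm⟩
      · subst hx
        rw [ef1_iff]
        constructor
        · rintro ⟨z, hz⟩
          have hz' : x < z := hz
          exact ⟨⟨⟨z, ne_of_gt hz'⟩, by exact lt_sub' (lt_trans hab hz')⟩, rfl⟩
        · rintro ⟨⟨w, hwb⟩, hw⟩
          have hw' : (⟨a, ne_of_lt hab⟩ : B.carrier) < ⟨w, hwb⟩ := hw
          have hwa : a < w := lt_sub_val hw'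
          obtain ⟨⟨z, hz⟩, hcz⟩ := hR.1 ⟨w, hwa⟩
          exact ⟨⟨z, hz⟩, hcz.symm⟩
    · obtain ⟨m1, m2⟩ := main x hx
      exact ⟨⟨x, hx⟩, rfl, m1, m2⟩
  · rintro ⟨x, hx⟩
    obtain ⟨m1, m2⟩ := main x hx
    exact ⟨x, rfl, m1, m2⟩

lemma card_del (A : CLO C) [Finite A.carrier] (b : A.carrier) :
    Nat.card (↥{x : A.carrier | x ≠ b}) < Nat.card A.carrier := by
  classical
  cases nonempty_fintype A.carrier
  rw [Nat.card_eq_fintype_card, Nat.card_eq_fintype_card]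
  exact Fintype.card_subtype_lt (x := b) (by simp)

end Aux

/-- no `≡₂`-optimal finite coloured linear order realizes the same `1`-character
(including the colour) at two distinct points. -/
theorem stmt10 {C : Type} (A : CLO C) [Finite A.carrier] (hopt : CLO.Optimal 2 A) :
    ∀ a b : A.carrier, CLO.SameChar 1 A a b → a = b := by
  intro a b hsc
  by_contra hne
  rcases lt_or_gt_of_ne hne with hab | hba
  · exact absurd (hopt _ (inferInstanceAs (Finite ↥{x : A.carrier | x ≠ b})) (key A a b hab hsc))
      (not_le.mpr (card_del A b))
  · exact absurd (hopt _ (inferInstanceAs (Finite ↥{x : A.carrier | x ≠ a})) (key A b a hba (sameChar_symm hsc)))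
      (not_le.mpr (card_del A a))
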